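/- For c ∈ (0,1], the function f(F) = 1/√(c(2F − 2 + c)) on ((2−c)/2, 1] is a probability density (it integrates to 1), its mean equals 1 − c/3, and its variance equals c²/45. -/

import Mathlib

open MeasureTheory Set

/-- Phase-flip fidelity density f(F) = 1/√(c(2F − 2 + c)). -/
noncomputable def fPf (c F : ℝ) : ℝ := 1 / Real.sqrt (c * (2 * F - 2 + c))

lemma fPf_integrable (c : ℝ) (hc : 0 < c) :
    IntervalIntegrable (fPf c) volume ((2 - c) / 2) 1 := by
  have hA : (2 - c) / 2 < 1 := by linarith
  have h0 : IntervalIntegrable (fun x : ℝ => x ^ (-(1/2) : ℝ)) volume 0 (1 - (2 - c)/2) :=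
    intervalIntegral.intervalIntegrable_rpow' (by norm_num)
  have h1 := h0.comp_sub_right ((2 - c)/2)
  rw [show (0 : ℝ) + (2 - c)/2 = (2 - c)/2 by ring,
    show (1 - (2 - c)/2) + (2 - c)/2 = 1 by ring] at h1
  have h2 := (h1.const_mul (1 / Real.sqrt (2 * c)))
  rw [intervalIntegrable_iff, uIoc_of_le hA.le] at h2 ⊢
  refine h2.congr_fun (fun F hF => ?_) measurableSet_Ioc
  have hF1 : (0:ℝ) < F - (2 - c)/2 := by simp at hF; linarith [hF.1]
  have hx : c * (2 * F - 2 + c) = 2 * c * (F - (2 - c)/2) := by ring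
  beta_reduce
  rw [Real.rpow_neg hF1.le, ← Real.sqrt_eq_rpow]
  rw [fPf, hx, Real.sqrt_mul (by positivity : (0:ℝ) ≤ 2*c),
    Real.sqrt_mul (by norm_num : (0:ℝ) ≤ 2)]
  rw [one_div, one_div, mul_inv, mul_inv, mul_inv]

lemma key (c : ℝ) (hc : 0 < c) (a b e : ℝ) :
    (∫ F in ((2 - c) / 2)..1,
      (5*a*c*F^2 + (c*(2*a*(c-2)+3*b))*F + c*(b*(c-2)+e)) * fPf c F) = (a + b + e) * c := by
  have hA : (2 - c) / 2 < 1 := by linarith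
  set g : ℝ → ℝ := fun F => (a*F^2 + b*F + e) * Real.sqrt (c*(2*F-2+c)) with hg
  have hcont : ContinuousOn g (Icc ((2-c)/2) 1) := by
    apply Continuous.continuousOn
    fun_prop
  have hderiv : ∀ x ∈ Ioo ((2-c)/2) 1, HasDerivWithinAt g
      ((5*a*c*x^2 + (c*(2*a*(c-2)+3*b))*x + c*(b*(c-2)+e)) * fPf c x) (Ioi x) x := by
    intro x hx
    have hu : (0:ℝ) < c * (2*x-2+c) := by
      have : (2-c)/2 < x := hx.1
      nlinarith
    have hs : (0:ℝ) < Real.sqrt (c * (2*x-2+c)) := Real.sqrt_pos.2 hu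
    have hd1 : HasDerivAt (fun F : ℝ => c*(2*F-2+c)) (2*c) x := by
      have := (((hasDerivAt_id x).const_mul 2).sub_const 2).add_const c |>.const_mul c
      simpa using this.congr_deriv (by ring)
    have hd2 : HasDerivAt (fun F : ℝ => Real.sqrt (c*(2*F-2+c)))
        (1 / (2 * Real.sqrt (c*(2*x-2+c))) * (2*c)) x :=
      (Real.hasDerivAt_sqrt hu.ne').comp x hd1
    have hd3 : HasDerivAt (fun F : ℝ => a*F^2 + b*F + e) (a*(2*x) + b) x := by
      have := (((hasDerivAt_pow 2 x).const_mul a).add ((hasDerivAt_id x).const_mul b)).add_const e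
      simpa using this.congr_deriv (by ring)
    have := hd3.mul hd2
    have heq : (a*(2*x) + b) * Real.sqrt (c*(2*x-2+c)) +
        (a*x^2 + b*x + e) * (1 / (2 * Real.sqrt (c*(2*x-2+c))) * (2*c)) =
        (5*a*c*x^2 + (c*(2*a*(c-2)+3*b))*x + c*(b*(c-2)+e)) * fPf c x := by
      rw [fPf]
      have hss : Real.sqrt (c*(2*x-2+c)) * Real.sqrt (c*(2*x-2+c)) = c*(2*x-2+c) :=
        Real.mul_self_sqrt hu.le
      set s := Real.sqrt (c*(2*x-2+c)) with hsdef
      clear_value s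
      field_simp
      linear_combination (2*a*x + b) * hss
    rw [← heq]
    exact this.hasDerivWithinAt
  have hint : IntervalIntegrable
      (fun F => (5*a*c*F^2 + (c*(2*a*(c-2)+3*b))*F + c*(b*(c-2)+e)) * fPf c F)
      volume ((2-c)/2) 1 :=
    (fPf_integrable c hc).continuousOn_mul (by fun_prop)
  have := intervalIntegral.integral_eq_sub_of_hasDeriv_right_of_le hA.le hcont hderiv hint
  rw [this, hg]
  have h1 : c * (2*1-2+c) = c * c := by ring
  have h2 : c * (2*((2-c)/2)-2+c) = 0 := by ring
  simp only [h1, h2]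
  rw [Real.sqrt_mul_self hc.le, Real.sqrt_zero]
  ring


/-- For c ∈ (0,1], f integrates to 1 on ((2−c)/2, 1], has mean 1 − c/3 and
variance c²/45. -/
theorem phase_flip_density_moments (c : ℝ) (hc : c ∈ Ioc (0 : ℝ) 1) :
    (∫ F in ((2 - c) / 2)..1, fPf c F) = 1 ∧
    (∫ F in ((2 - c) / 2)..1, F * fPf c F) = 1 - c / 3 ∧
    (∫ F in ((2 - c) / 2)..1, F ^ 2 * fPf c F) - (1 - c / 3) ^ 2 = c ^ 2 / 45 := by
  obtain ⟨hc0, hc1⟩ := hc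
  have hcne : c ≠ 0 := hc0.ne'
  refine ⟨?_, ?_, ?_⟩
  · have h := key c hc0 0 0 (1/c)
    have heq : (∫ F in ((2 - c) / 2)..1, fPf c F) =
        ∫ F in ((2 - c) / 2)..1,
          (5*(0:ℝ)*c*F^2 + c*(2*0*(c-2)+3*0)*F + c*(0*(c-2)+1/c)) * fPf c F := by
      apply intervalIntegral.integral_congr
      intro F hF
      show fPf c F = _ * fPf c F
      rw [show 5*(0:ℝ)*c*F^2 + c*(2*0*(c-2)+3*0)*F + c*(0*(c-2)+1/c) = 1 by field_simp; ring,
        one_mul]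
    rw [heq, h]
    field_simp; ring
  · have h := key c hc0 0 (1/(3*c)) ((2-c)/(3*c))
    have heq : (∫ F in ((2 - c) / 2)..1, F * fPf c F) =
        ∫ F in ((2 - c) / 2)..1,
          (5*(0:ℝ)*c*F^2 + c*(2*0*(c-2)+3*(1/(3*c)))*F + c*((1/(3*c))*(c-2)+(2-c)/(3*c)))
            * fPf c F := by
      apply intervalIntegral.integral_congr
      intro F hF
      show F * fPf c F = _ * fPf c F
      rw [show 5*(0:ℝ)*c*F^2 + c*(2*0*(c-2)+3*(1/(3*c)))*F + c*((1/(3*c))*(c-2)+(2-c)/(3*c))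
        = F by field_simp; ring]
    rw [heq, h]
    field_simp; ring
  · have h := key c hc0 (1/(5*c)) (2*(2-c)/(15*c)) (2*(2-c)^2/(15*c))
    have heq : (∫ F in ((2 - c) / 2)..1, F ^ 2 * fPf c F) =
        ∫ F in ((2 - c) / 2)..1,
          (5*(1/(5*c))*c*F^2 + c*(2*(1/(5*c))*(c-2)+3*(2*(2-c)/(15*c)))*F
            + c*((2*(2-c)/(15*c))*(c-2)+2*(2-c)^2/(15*c))) * fPf c F := by
      apply intervalIntegral.integral_congr
      intro F hF
      show F ^ 2 * fPf c F = _ * fPf c F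
      rw [show 5*(1/(5*c))*c*F^2 + c*(2*(1/(5*c))*(c-2)+3*(2*(2-c)/(15*c)))*F
        + c*((2*(2-c)/(15*c))*(c-2)+2*(2-c)^2/(15*c)) = F^2 by field_simp; ring]
    rw [heq, h]
    field_simp; ring
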